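/- Let X_1,...,X_n be independent non-negative real-valued random variables with E[max_i X_i] < ∞, and let T = E[max_i X_i]/2. Define the stopping rule τ that stops at the first index i with X_i ≥ T (if any). Then E[X_τ] ≥ T = (1/2)·E[max_i X_i], where X_τ = 0 if no index is accepted. -/

import Mathlib

open MeasureTheory ProbabilityTheory

/-- The prophet inequality via the median-of-expectation threshold rule:
with `T = E[max_i X_i]/2`, accepting the first `X_i ≥ T` yields expected payoff at least `T`. -/
theorem stmt0 {Ω : Type*} [MeasurableSpace Ω] (μ : Measure Ω) [IsProbabilityMeasure μ]
    (n : ℕ) [NeZero n] (X : Fin n → Ω → ℝ)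
    (hmeas : ∀ i, Measurable (X i))
    (hnonneg : ∀ i ω, 0 ≤ X i ω)
    (hindep : iIndepFun X μ)
    (hint : Integrable (fun ω => Finset.univ.sup' Finset.univ_nonempty (fun i => X i ω)) μ)
    (T : ℝ)
    (hT : T = (∫ ω, Finset.univ.sup' Finset.univ_nonempty (fun i => X i ω) ∂μ) / 2)
    (payoff : Ω → ℝ)
    (hpayoff : ∀ ω, payoff ω =
      if h : ((Finset.univ : Finset (Fin n)).filter (fun i => T ≤ X i ω)).Nonempty
      then X (((Finset.univ : Finset (Fin n)).filter (fun i => T ≤ X i ω)).min' h) ω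
      else 0) :
    T ≤ ∫ ω, payoff ω ∂μ := by
  classical
  have hn : 0 < n := Nat.pos_of_ne_zero (NeZero.ne n)
  set M : Ω → ℝ := fun ω => Finset.univ.sup' Finset.univ_nonempty (fun i => X i ω) with hMdef
  set g : Fin n → Ω → ℝ := fun i ω => max (X i ω - T) 0 with hgdef
  set B : Fin n → Set Ω := fun i => {ω | ∀ j, j < i → X j ω < T} with hBdef
  set A : Set Ω := {ω | ∃ i, T ≤ X i ω} with hAdef
  set ind : Fin n → Ω → ℝ := fun i => (B i).indicator (fun _ => (1:ℝ)) with hinddef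
  have hXleM : ∀ i ω, X i ω ≤ M ω := fun i ω =>
    Finset.le_sup' (fun i => X i ω) (Finset.mem_univ i)
  have hMnn : ∀ ω, 0 ≤ M ω := fun ω => le_trans (hnonneg ⟨0, hn⟩ ω) (hXleM _ ω)
  have hT0 : 0 ≤ T := by
    rw [hT]
    exact div_nonneg (integral_nonneg hMnn) (by norm_num)
  have hAmeas : MeasurableSet A := by
    have h : A = ⋃ i, {ω | T ≤ X i ω} := by ext ω; simp [hAdef]
    rw [h]
    exact MeasurableSet.iUnion fun i => measurableSet_le measurable_const (hmeas i)
  have hBmeas : ∀ i, MeasurableSet (B i) := by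
    intro i
    have h : B i = ⋂ j, ⋂ (_ : j < i), {ω | X j ω < T} := by ext ω; simp [hBdef]
    rw [h]
    exact MeasurableSet.iInter fun j => MeasurableSet.iInter fun _ =>
      measurableSet_lt (hmeas j) measurable_const
  have hgmeas : ∀ i, Measurable (g i) := fun i =>
    ((hmeas i).sub measurable_const).max measurable_const
  have hgnn : ∀ i ω, 0 ≤ g i ω := fun i ω => le_max_right _ _
  have hgleM : ∀ i ω, g i ω ≤ M ω := fun i ω =>
    max_le (le_trans (sub_le_self _ hT0) (hXleM i ω)) (hMnn ω)
  have hgint : ∀ i, Integrable (g i) μ := by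
    intro i
    refine hint.mono ((hgmeas i).aestronglyMeasurable) (ae_of_all _ fun ω => ?_)
    rw [Real.norm_eq_abs, abs_of_nonneg (hgnn i ω), Real.norm_eq_abs,
      abs_of_nonneg (hMnn ω)]
    exact hgleM i ω
  have hindmeas : ∀ i, Measurable (ind i) := fun i => measurable_const.indicator (hBmeas i)
  have hind01 : ∀ i ω, 0 ≤ ind i ω ∧ ind i ω ≤ 1 := by
    intro i ω
    simp only [hinddef, Set.indicator_apply]
    split <;> norm_num
  have hgind_int : ∀ i, Integrable (fun ω => g i ω * ind i ω) μ := by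
    intro i
    refine (hgint i).mono (((hgmeas i).mul (hindmeas i)).aestronglyMeasurable)
      (ae_of_all _ fun ω => ?_)
    rw [Real.norm_eq_abs, Real.norm_eq_abs, abs_of_nonneg (hgnn i ω),
      abs_of_nonneg (mul_nonneg (hgnn i ω) (hind01 i ω).1)]
    calc g i ω * ind i ω ≤ g i ω * 1 :=
          mul_le_mul_of_nonneg_left (hind01 i ω).2 (hgnn i ω)
      _ = g i ω := mul_one _
  -- key pointwise identity
  have hkey : ∀ ω, payoff ω = A.indicator (fun _ => T) ω + ∑ i, g i ω * ind i ω := by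
    intro ω
    rw [hpayoff ω]
    by_cases h : ((Finset.univ : Finset (Fin n)).filter (fun i => T ≤ X i ω)).Nonempty
    · rw [dif_pos h]
      set i0 := ((Finset.univ : Finset (Fin n)).filter (fun i => T ≤ X i ω)).min' h with hi0
      have hi0mem : i0 ∈ (Finset.univ : Finset (Fin n)).filter (fun i => T ≤ X i ω) :=
        Finset.min'_mem _ h
      have hi0T : T ≤ X i0 ω := (Finset.mem_filter.mp hi0mem).2
      have hlt : ∀ j, j < i0 → X j ω < T := by
        intro j hj
        by_contra hc
        push_neg at hc
        exact absurd (Finset.min'_le _ j (Finset.mem_filter.mpr ⟨Finset.mem_univ j, hc⟩))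
          (not_le.mpr hj)
      have hsum : ∑ i, g i ω * ind i ω = X i0 ω - T := by
        rw [Finset.sum_eq_single i0]
        · have h1 : ind i0 ω = 1 := by
            simp only [hinddef, Set.indicator_apply]
            rw [if_pos (show ω ∈ B i0 from hlt)]
          rw [h1, mul_one]
          exact max_eq_left (sub_nonneg.mpr hi0T)
        · intro i _ hne
          rcases lt_or_gt_of_ne hne with hlt' | hgt
          · have hx : X i ω < T := hlt i hlt'
            have hgz : g i ω = 0 := max_eq_right (by linarith)
            rw [hgz, zero_mul]
          · have hiz : ind i ω = 0 := by
              simp only [hinddef, Set.indicator_apply]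
              rw [if_neg]
              intro hmem
              exact absurd (hmem i0 hgt) (not_lt.mpr hi0T)
            rw [hiz, mul_zero]
        · intro hne; exact absurd (Finset.mem_univ i0) hne
      have hAone : A.indicator (fun _ => T) ω = T :=
        Set.indicator_of_mem (show ω ∈ A from ⟨i0, hi0T⟩) _
      rw [hAone, hsum]; ring
    · rw [dif_neg h]
      have hall : ∀ i, X i ω < T := by
        intro i
        by_contra hc
        push_neg at hc
        exact h ⟨i, Finset.mem_filter.mpr ⟨Finset.mem_univ i, hc⟩⟩
      have hA0 : A.indicator (fun _ => T) ω = 0 := by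
        apply Set.indicator_of_notMem
        rintro ⟨i, hi⟩
        exact absurd hi (not_le.mpr (hall i))
      have hsum0 : ∀ i ∈ (Finset.univ : Finset (Fin n)), g i ω * ind i ω = 0 := by
        intro i _
        have hgz : g i ω = 0 := max_eq_right (by linarith [hall i])
        rw [hgz, zero_mul]
      rw [hA0, Finset.sum_eq_zero hsum0]; ring
  -- independence
  have hIndep : ∀ i, IndepFun (g i) (ind i) μ := by
    intro i
    set S1 : Finset (Fin n) := {i} with hS1
    set S2 : Finset (Fin n) := Finset.univ.filter (· < i) with hS2
    have hdisj : Disjoint S1 S2 := by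
      rw [Finset.disjoint_left]
      intro a ha hb
      rw [hS1, Finset.mem_singleton] at ha
      rw [hS2, Finset.mem_filter] at hb
      exact absurd hb.2 (by simp [ha])
    have base := hindep.indepFun_finset S1 S2 hdisj hmeas
    have hi1 : i ∈ S1 := Finset.mem_singleton_self i
    set φ : ({x // x ∈ S1} → ℝ) → ℝ := fun v => max (v ⟨i, hi1⟩ - T) 0 with hφ
    set ψ : ({x // x ∈ S2} → ℝ) → ℝ := fun v => if ∀ j, v j < T then (1:ℝ) else 0 with hψ
    have hφm : Measurable φ :=
      ((measurable_pi_apply _).sub measurable_const).max measurable_const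
    have hψm : Measurable ψ := by
      have hset : MeasurableSet {v : {x // x ∈ S2} → ℝ | ∀ j, v j < T} := by
        have he : {v : {x // x ∈ S2} → ℝ | ∀ j, v j < T}
            = ⋂ j, (fun v : {x // x ∈ S2} → ℝ => v j) ⁻¹' Set.Iio T := by
          ext v; simp
        rw [he]
        exact MeasurableSet.iInter fun j => (measurable_pi_apply j) measurableSet_Iio
      exact Measurable.ite hset measurable_const measurable_const
    have e1 : g i = φ ∘ (fun ω (j : {x // x ∈ S1}) => X j ω) := by
      funext ω; simp [hgdef, hφ, Function.comp]
    have e2 : ind i = ψ ∘ (fun ω (j : {x // x ∈ S2}) => X j ω) := by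
      funext ω
      simp only [Function.comp_apply]
      simp only [hinddef, Set.indicator_apply, hψ]
      by_cases hb : ω ∈ B i
      · rw [if_pos hb, if_pos]
        intro j
        exact hb j.1 (Finset.mem_filter.mp j.2).2
      · rw [if_neg hb, if_neg]
        intro hc
        exact hb fun j hj => hc ⟨j, Finset.mem_filter.mpr ⟨Finset.mem_univ j, hj⟩⟩
    rw [e1, e2]
    exact base.comp hφm hψm
  -- product formula
  have hindint : ∀ i, Integrable (ind i) μ := fun i =>
    (integrable_const (1:ℝ)).indicator (hBmeas i)
  have hprod : ∀ i, ∫ ω, g i ω * ind i ω ∂μ = (∫ ω, g i ω ∂μ) * (μ (B i)).toReal := by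
    intro i
    have hm := (hIndep i).integral_mul_eq_mul_integral (hgint i).aestronglyMeasurable (hindint i).aestronglyMeasurable
    have hiB : ∫ ω, ind i ω ∂μ = (μ (B i)).toReal := by
      simp only [hinddef]
      rw [integral_indicator_const (1:ℝ) (hBmeas i), smul_eq_mul, mul_one, Measure.real]
    calc ∫ ω, g i ω * ind i ω ∂μ = ∫ ω, (g i * ind i) ω ∂μ := rfl
      _ = (∫ ω, g i ω ∂μ) * ∫ ω, ind i ω ∂μ := hm
      _ = (∫ ω, g i ω ∂μ) * (μ (B i)).toReal := by rw [hiB]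
  -- measure bounds
  have hABle : ∀ i, (μ Aᶜ).toReal ≤ (μ (B i)).toReal := by
    intro i
    apply ENNReal.toReal_mono (measure_ne_top μ _)
    apply measure_mono
    intro ω hω j hj
    by_contra hc
    push_neg at hc
    exact hω ⟨j, hc⟩
  have hq0 : 0 ≤ (μ Aᶜ).toReal := ENNReal.toReal_nonneg
  have haq : (μ A).toReal + (μ Aᶜ).toReal = 1 := by
    rw [← ENNReal.toReal_add (measure_ne_top μ _) (measure_ne_top μ _),
      measure_add_measure_compl hAmeas, measure_univ, ENNReal.toReal_one]
  -- sum of expectations bound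
  have hIM : ∫ ω, M ω ∂μ = 2 * T := by rw [hT]; ring
  have hSge : T ≤ ∑ i, ∫ ω, g i ω ∂μ := by
    have h1 : ∫ ω, (M ω - T) ∂μ ≤ ∫ ω, ∑ i, g i ω ∂μ := by
      apply integral_mono (hint.sub (integrable_const T))
        (integrable_finset_sum _ fun i _ => hgint i)
      intro ω
      obtain ⟨i0, -, hi0⟩ := Finset.exists_mem_eq_sup' Finset.univ_nonempty (fun i => X i ω)
      calc M ω - T = X i0 ω - T := by rw [hMdef]; simp only; rw [hi0]
        _ ≤ g i0 ω := le_max_left _ _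
        _ ≤ ∑ i, g i ω := Finset.single_le_sum (fun i _ => hgnn i ω) (Finset.mem_univ i0)
    have h2 : ∫ ω, (M ω - T) ∂μ = T := by
      rw [integral_sub hint (integrable_const T), hIM, integral_const, probReal_univ,
        one_smul]
      ring
    rw [integral_finset_sum _ (fun i _ => hgint i)] at h1
    linarith
  -- put it together
  have hps : ∫ ω, payoff ω ∂μ
      = (μ A).toReal * T + ∑ i, (∫ ω, g i ω ∂μ) * (μ (B i)).toReal := by
    calc ∫ ω, payoff ω ∂μ
        = ∫ ω, (A.indicator (fun _ => T) ω + ∑ i, g i ω * ind i ω) ∂μ :=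
          integral_congr_ae (ae_of_all _ hkey)
      _ = (∫ ω, A.indicator (fun _ => T) ω ∂μ) + ∫ ω, ∑ i, g i ω * ind i ω ∂μ :=
          integral_add ((integrable_const T).indicator hAmeas)
            (integrable_finset_sum _ fun i _ => hgind_int i)
      _ = (μ A).toReal * T + ∑ i, ∫ ω, g i ω * ind i ω ∂μ := by
          rw [integral_indicator_const T hAmeas, smul_eq_mul, Measure.real,
            integral_finset_sum _ fun i _ => hgind_int i]
      _ = (μ A).toReal * T + ∑ i, (∫ ω, g i ω ∂μ) * (μ (B i)).toReal := by
          congr 1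
          exact Finset.sum_congr rfl fun i _ => hprod i
  rw [hps]
  have hterm : ∀ i ∈ (Finset.univ : Finset (Fin n)),
      (∫ ω, g i ω ∂μ) * (μ Aᶜ).toReal ≤ (∫ ω, g i ω ∂μ) * (μ (B i)).toReal :=
    fun i _ => mul_le_mul_of_nonneg_left (hABle i) (integral_nonneg (hgnn i))
  have hlow : (μ Aᶜ).toReal * T ≤ ∑ i, (∫ ω, g i ω ∂μ) * (μ (B i)).toReal := by
    calc (μ Aᶜ).toReal * T ≤ (μ Aᶜ).toReal * ∑ i, ∫ ω, g i ω ∂μ :=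
          mul_le_mul_of_nonneg_left hSge hq0
      _ = ∑ i, (∫ ω, g i ω ∂μ) * (μ Aᶜ).toReal := by
          rw [Finset.mul_sum]
          exact Finset.sum_congr rfl fun i _ => mul_comm _ _
      _ ≤ ∑ i, (∫ ω, g i ω ∂μ) * (μ (B i)).toReal := Finset.sum_le_sum hterm
  have hTsplit : T = (μ A).toReal * T + (μ Aᶜ).toReal * T := by
    rw [← add_mul, haq, one_mul]
  linarith
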